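/- If μ is a B-measure on ∂K for an origin-symmetric planar convex body K, then the support of μ is contained in A(K) \ E(K), where E(K) is the union of the relative interiors of the non-degenerate line segments contained in ∂K. -/

import Mathlib

open Set MeasureTheory Pointwise

abbrev Plane := ℝ × ℝ

/-- An origin-symmetric convex body in the plane: compact, convex,
nonempty interior, symmetric about the origin. -/
def IsSymmConvexBody (K : Set Plane) : Prop :=
  Convex ℝ K ∧ IsCompact K ∧ (interior K).Nonempty ∧ K = -K

/-- Birkhoff orthogonality with respect to the norm induced by `K`
(whose Minkowski functional is `gauge K`). -/
def BOrth (K : Set Plane) (x y : Plane) : Prop :=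
  ∀ t : ℝ, gauge K x ≤ gauge K (x + t • y)

/-- The set of Auerbach points of `K`. -/
def Auerbach (K : Set Plane) : Set Plane :=
  {x | x ∈ frontier K ∧ ∃ y ∈ frontier K, BOrth K x y ∧ BOrth K y x}

/-- `E(K)`: the union of the open non-degenerate segments contained in `∂K`. -/
def SegUnion (K : Set Plane) : Set Plane :=
  {x | ∃ a b : Plane, a ≠ b ∧ segment ℝ a b ⊆ frontier K ∧ x ∈ openSegment ℝ a b}

/-- A closed antipode-free arc of `∂K` with endpoints `x` and `y`:
a closed connected subset of `∂K` containing `x` and `y`, containing no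
pair of antipodal points, and minimal with these properties. -/
def IsBArc (K C : Set Plane) (x y : Plane) : Prop :=
  C ⊆ frontier K ∧ IsClosed C ∧ IsPreconnected C ∧ x ∈ C ∧ y ∈ C ∧
  (∀ z ∈ C, -z ∉ C) ∧
  ∀ C' ⊆ C, IsClosed C' → IsPreconnected C' → x ∈ C' → y ∈ C' → C' = C

/-- An angular measure on `∂K`. -/
def IsAngularMeasure (K : Set Plane) (μ : Measure Plane) : Prop :=
  μ (frontier K) = ENNReal.ofReal (2 * Real.pi) ∧
  μ (frontier K)ᶜ = 0 ∧
  (∀ X : Set Plane, μ (-X) = μ X) ∧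
  (∀ x : Plane, μ {x} = 0)

/-- A B-measure: an angular measure giving `π/2` to every closed
antipode-free arc whose endpoints are Birkhoff orthogonal. -/
def IsBMeasure (K : Set Plane) (μ : Measure Plane) : Prop :=
  IsAngularMeasure K μ ∧
  ∀ C x y, IsBArc K C x y → BOrth K x y → μ C = ENNReal.ofReal (Real.pi / 2)

/-- The support of a Borel measure: the points all of whose open
neighborhoods have positive measure. -/
def msupp {α : Type*} [TopologicalSpace α] [MeasurableSpace α]
    (μ : Measure α) : Set α :=
  {x | ∀ U : Set α, IsOpen U → x ∈ U → 0 < μ U}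


namespace BMAux

open Real

noncomputable abbrev gK (K : Set Plane) : Plane → ℝ := gauge K

/-- cross product of two planar vectors -/
def crossP (x y : Plane) : ℝ := x.1 * y.2 - x.2 * y.1

lemma crossP_continuous (x : Plane) : Continuous (fun z => crossP x z) := by
  unfold crossP; fun_prop

lemma crossP_continuous' (y : Plane) : Continuous (fun z => crossP z y) := by
  unfold crossP; fun_prop

lemma crossP_smul_right (x : Plane) (r : ℝ) (y : Plane) :
    crossP x (r • y) = r * crossP x y := by
  simp [crossP, Prod.smul_fst, Prod.smul_snd, smul_eq_mul]; ring

lemma crossP_smul_left (x : Plane) (r : ℝ) (y : Plane) :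
    crossP (r • x) y = r * crossP x y := by
  simp [crossP, Prod.smul_fst, Prod.smul_snd, smul_eq_mul]; ring

lemma crossP_add_left (a b y : Plane) :
    crossP (a + b) y = crossP a y + crossP b y := by
  simp [crossP, Prod.fst_add, Prod.snd_add]; ring

lemma crossP_add_right (x a b : Plane) :
    crossP x (a + b) = crossP x a + crossP x b := by
  simp [crossP, Prod.fst_add, Prod.snd_add]; ring

lemma crossP_self (x : Plane) : crossP x x = 0 := by simp [crossP]; ring

lemma crossP_neg (x y : Plane) : crossP x (-y) = - crossP x y := by
  simp [crossP]; ring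

lemma crossP_neg_left (x y : Plane) : crossP (-x) y = - crossP x y := by
  simp [crossP]; ring

lemma crossP_anti (x y : Plane) : crossP x y = - crossP y x := by
  simp [crossP]; ring

/-- if cross product vanishes, vectors are parallel -/
lemma crossP_eq_zero_parallel {x y : Plane} (hx : x ≠ 0) (h : crossP x y = 0) :
    ∃ k : ℝ, y = k • x := by
  have h' : x.1 * y.2 - x.2 * y.1 = 0 := h
  rcases eq_or_ne x.1 0 with h1 | h1
  · have h2 : x.2 ≠ 0 := fun h2 => hx (Prod.ext h1 h2)
    have hy1 : y.1 = 0 := by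
      have : x.2 * y.1 = 0 := by rw [h1] at h'; linarith
      rcases mul_eq_zero.1 this with h | h
      · exact absurd h h2
      · exact h
    refine ⟨y.2 / x.2, Prod.ext ?_ ?_⟩
    · simp [Prod.smul_fst, smul_eq_mul, h1, hy1]
    · simp [Prod.smul_snd, smul_eq_mul]; field_simp
  · refine ⟨y.1 / x.1, Prod.ext ?_ ?_⟩
    · simp [Prod.smul_fst, smul_eq_mul]; field_simp
    · simp [Prod.smul_snd, smul_eq_mul]; field_simp; nlinarith [h']

section Body

variable {K : Set Plane} (hK : IsSymmConvexBody K)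

include hK

lemma zero_mem_interior : (0 : Plane) ∈ interior K := by
  obtain ⟨hconv, hcomp, ⟨x, hx⟩, hsymm⟩ := hK
  have hx' : -x ∈ K := by
    rw [hsymm]; exact Set.neg_mem_neg.2 (interior_subset hx)
  have h2 := hconv.combo_interior_closure_mem_interior hx (subset_closure hx')
    (a := 1/2) (b := 1/2) (by norm_num) (by norm_num) (by norm_num)
  have h3 : (1/2 : ℝ) • x + (1/2 : ℝ) • (-x) = 0 := by
    rw [smul_neg]; exact add_neg_cancel _
  rwa [h3] at h2

lemma K_nhds : K ∈ nhds (0 : Plane) :=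
  mem_interior_iff_mem_nhds.1 (zero_mem_interior hK)

lemma gauge_cont : Continuous (gauge K) :=
  continuous_gauge hK.1 (K_nhds hK)

lemma gauge_symm (x : Plane) : gauge K (-x) = gauge K x := by
  apply gauge_neg
  intro y hy
  rw [hK.2.2.2]
  exact Set.neg_mem_neg.2 hy

lemma mem_frontier_iff {x : Plane} : x ∈ frontier K ↔ gauge K x = 1 :=
  (gauge_eq_one_iff_mem_frontier hK.1 (K_nhds hK)).symm

lemma mem_interior_iff {x : Plane} : x ∈ interior K ↔ gauge K x < 1 :=
  (gauge_lt_one_iff_mem_interior hK.1 (K_nhds hK)).symm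

lemma mem_K_iff {x : Plane} : x ∈ K ↔ gauge K x ≤ 1 := by
  rw [gauge_le_one_iff_mem_closure hK.1 (K_nhds hK), hK.2.1.isClosed.closure_eq]

lemma gauge_eq_zero_iff {x : Plane} : gauge K x = 0 ↔ x = 0 := by
  constructor
  · intro h
    by_contra hx
    obtain ⟨R, hR⟩ := hK.2.1.isBounded.subset_closedBall 0
    have hxn : 0 < ‖x‖ := norm_pos_iff.2 hx
    obtain ⟨n, hn⟩ := exists_nat_gt ((R + 1) / ‖x‖)
    have hmem : (n : ℝ) • x ∈ K := by
      rw [mem_K_iff hK]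
      rw [gauge_smul_of_nonneg (by positivity), h, smul_eq_mul, mul_zero]
      norm_num
    have := hR hmem
    rw [Metric.mem_closedBall, dist_zero_right, norm_smul] at this
    simp only [Real.norm_natCast] at this
    have hR0 : 0 ≤ R := le_trans (by positivity) this
    have : (R + 1) / ‖x‖ * ‖x‖ < (n:ℝ) * ‖x‖ := by
      apply mul_lt_mul_of_pos_right hn hxn
    rw [div_mul_cancel₀ _ (ne_of_gt hxn)] at this
    linarith
  · intro h; rw [h]; exact gauge_zero

lemma gauge_pos {x : Plane} (hx : x ≠ 0) : 0 < gauge K x :=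
  lt_of_le_of_ne (gauge_nonneg x) (fun h => hx ((gauge_eq_zero_iff hK).1 h.symm))



/-- the boundary point in direction θ -/
noncomputable def bphi (θ : ℝ) : Plane :=
  (gauge K (Real.cos θ, Real.sin θ))⁻¹ • ((Real.cos θ, Real.sin θ) : Plane)

omit hK in
lemma unitv_ne_zero (θ : ℝ) : ((Real.cos θ, Real.sin θ) : Plane) ≠ 0 := by
  intro h
  have h1 : Real.cos θ = 0 := congrArg Prod.fst h
  have h2 : Real.sin θ = 0 := congrArg Prod.snd h
  have := Real.sin_sq_add_cos_sq θ
  rw [h1, h2] at this; norm_num at this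

lemma gauge_unitv_pos (θ : ℝ) : 0 < gauge K (Real.cos θ, Real.sin θ) :=
  gauge_pos hK (unitv_ne_zero θ)

lemma bphi_mem_frontier (θ : ℝ) : bphi (K := K) θ ∈ frontier K := by
  rw [mem_frontier_iff hK]
  unfold bphi
  rw [gauge_smul_of_nonneg (le_of_lt (inv_pos.2 (gauge_unitv_pos hK θ)))]
  rw [smul_eq_mul, inv_mul_cancel₀ (ne_of_gt (gauge_unitv_pos hK θ))]

lemma bphi_continuous : Continuous (bphi (K := K)) := by
  unfold bphi
  apply Continuous.smul (f := fun θ : ℝ => (gauge K (Real.cos θ, Real.sin θ))⁻¹)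
    (g := fun θ : ℝ => ((Real.cos θ, Real.sin θ) : Plane))
  · apply Continuous.inv₀
    · exact (gauge_cont hK).comp (by fun_prop)
    · intro θ; exact ne_of_gt (gauge_unitv_pos hK θ)
  · fun_prop

lemma bphi_ne_zero (θ : ℝ) : bphi (K := K) θ ≠ 0 := by
  intro h
  have := bphi_mem_frontier hK (K := K) θ
  rw [mem_frontier_iff hK, h] at this
  rw [gauge_zero] at this; norm_num at this

lemma bphi_add_pi (θ : ℝ) : bphi (K := K) (θ + π) = - bphi (K := K) θ := by
  unfold bphi
  have hc : Real.cos (θ + π) = -Real.cos θ := Real.cos_add_pi θ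
  have hs : Real.sin (θ + π) = -Real.sin θ := Real.sin_add_pi θ
  have hneg : ((Real.cos (θ + π), Real.sin (θ + π)) : Plane)
      = -((Real.cos θ, Real.sin θ) : Plane) := by
    rw [hc, hs]; rfl
  rw [hneg, gauge_symm hK, smul_neg]

omit hK in
lemma bphi_periodic : Function.Periodic (bphi (K := K)) (2 * π) := by
  intro θ
  unfold bphi
  rw [Real.cos_add_two_pi, Real.sin_add_two_pi]

omit hK in
lemma crossP_bphi (s t : ℝ) :
    crossP (bphi (K := K) s) (bphi (K := K) t) =
      (gauge K (Real.cos s, Real.sin s))⁻¹ * (gauge K (Real.cos t, Real.sin t))⁻¹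
        * Real.sin (t - s) := by
  unfold bphi
  rw [crossP_smul_left, crossP_smul_right]
  have : crossP ((Real.cos s, Real.sin s) : Plane) ((Real.cos t, Real.sin t) : Plane)
      = Real.sin (t - s) := by
    rw [Real.sin_sub]; unfold crossP; ring
  rw [this]; ring

/-- injectivity of bphi on windows shorter than 2π -/
lemma bphi_inj {a b : ℝ} (h : bphi (K := K) a = bphi (K := K) b)
    (hab : |a - b| < 2 * π) : a = b := by
  unfold bphi at h
  set ga := gauge K (Real.cos a, Real.sin a) with hga
  set gb := gauge K (Real.cos b, Real.sin b) with hgb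
  have hga0 : 0 < ga := gauge_unitv_pos hK a
  have hgb0 : 0 < gb := gauge_unitv_pos hK b
  have h1 : Real.cos a = (ga * gb⁻¹) * Real.cos b ∧ Real.sin a = (ga * gb⁻¹) * Real.sin b := by
    have h1 := congrArg Prod.fst h
    have h2 := congrArg Prod.snd h
    simp only [Prod.smul_fst, Prod.smul_snd, smul_eq_mul] at h1 h2
    constructor
    · field_simp at h1 ⊢; nlinarith [h1]
    · field_simp at h2 ⊢; nlinarith [h2]
  set c := ga * gb⁻¹ with hc
  have hc0 : 0 < c := by positivity
  have hcsq : c ^ 2 = 1 := by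
    have hpa := Real.sin_sq_add_cos_sq a
    have hpb := Real.sin_sq_add_cos_sq b
    rw [h1.1, h1.2] at hpa
    nlinarith [hpa, hpb]
  have hc1 : c = 1 := by nlinarith
  rw [hc1, one_mul] at h1
  -- now cos a = cos b, sin a = sin b
  have h2 : sin a = sin b := by rw [h1.2]; ring
  have hang := Real.Angle.cos_sin_inj h1.1 h2
  obtain ⟨k, hk⟩ := Real.Angle.angle_eq_iff_two_pi_dvd_sub.1 hang
  have hk' : |(k : ℝ)| < 1 := by
    have hpi := Real.pi_pos
    rw [hk] at hab
    rw [abs_mul, abs_mul] at hab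
    rw [abs_of_pos (by norm_num : (0:ℝ) < 2), abs_of_pos hpi] at hab
    nlinarith [abs_nonneg (k : ℝ)]
  have hk0 : k = 0 := by
    by_contra h0
    have : (1 : ℝ) ≤ |(k : ℝ)| := by
      rw [← Int.cast_abs]
      exact_mod_cast Int.one_le_abs (by omega)
    linarith
  rw [hk0] at hk
  simp at hk
  linarith [hk]

/-- surjectivity of bphi onto the frontier, with angle in a given window -/
lemma bphi_surj {z : Plane} (hz : z ∈ frontier K) (c : ℝ) :
    ∃ θ ∈ Ico c (c + 2 * π), bphi (K := K) θ = z := by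
  have hz1 : gauge K z = 1 := (mem_frontier_iff hK).1 hz
  have hz0 : z ≠ 0 := by
    intro h; rw [h, gauge_zero] at hz1; norm_num at hz1
  set ζ : ℂ := ⟨z.1, z.2⟩ with hζ
  have hζ0 : ζ ≠ 0 := by
    intro h
    apply hz0
    have h1 : z.1 = 0 := congrArg Complex.re h
    have h2 : z.2 = 0 := congrArg Complex.im h
    exact Prod.ext h1 h2
  have habs : 0 < ‖ζ‖ := by
    exact norm_pos_iff.2 hζ0
  set θ₀ := Complex.arg ζ with hθ₀
  have hcos : Real.cos θ₀ = z.1 / ‖ζ‖ := Complex.cos_arg hζ0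
  have hsin : Real.sin θ₀ = z.2 / ‖ζ‖ := Complex.sin_arg ζ
  have hunit : ((Real.cos θ₀, Real.sin θ₀) : Plane) = (‖ζ‖)⁻¹ • z := by
    rw [hcos, hsin]
    apply Prod.ext <;> simp [Prod.smul_fst, Prod.smul_snd, smul_eq_mul] <;> ring
  have hphi0 : bphi (K := K) θ₀ = z := by
    unfold bphi
    rw [hunit, gauge_smul_of_nonneg (le_of_lt (inv_pos.2 habs)), smul_eq_mul, hz1, mul_one,
      inv_inv, smul_smul, mul_inv_cancel₀ (ne_of_gt habs), one_smul]
  have h2pi : (0 : ℝ) < 2 * π := by positivity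
  refine ⟨toIcoMod h2pi c θ₀, toIcoMod_mem_Ico h2pi c θ₀, ?_⟩
  have := self_sub_toIcoDiv_zsmul h2pi c θ₀
  rw [← this]
  rw [(bphi_periodic (K := K)).sub_zsmul_eq]
  exact hphi0

/-- the arc of the frontier between angles s and t -/
noncomputable def arcK (s t : ℝ) : Set Plane := bphi (K := K) '' Icc s t

omit hK in
lemma arc_mono {s t s' t' : ℝ} (hs : s ≤ s') (ht : t' ≤ t) :
    arcK (K := K) s' t' ⊆ arcK (K := K) s t :=
  Set.image_mono (Icc_subset_Icc hs ht)

lemma arc_sub_frontier (s t : ℝ) : arcK (K := K) s t ⊆ frontier K := by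
  rintro z ⟨θ, _, rfl⟩; exact bphi_mem_frontier hK θ

lemma arc_compact (s t : ℝ) : IsCompact (arcK (K := K) s t) :=
  (isCompact_Icc).image (bphi_continuous hK)

lemma arc_closed (s t : ℝ) : IsClosed (arcK (K := K) s t) :=
  (arc_compact hK s t).isClosed

lemma arc_measurable (s t : ℝ) : MeasurableSet (arcK (K := K) s t) :=
  (arc_closed hK s t).measurableSet

lemma arc_preconnected (s t : ℝ) : IsPreconnected (arcK (K := K) s t) :=
  (isPreconnected_Icc).image _ (bphi_continuous hK).continuousOn

omit hK in
lemma mem_arc_left {s t : ℝ} (h : s ≤ t) : bphi (K := K) s ∈ arcK (K := K) s t :=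
  ⟨s, left_mem_Icc.2 h, rfl⟩

omit hK in
lemma mem_arc_right {s t : ℝ} (h : s ≤ t) : bphi (K := K) t ∈ arcK (K := K) s t :=
  ⟨t, right_mem_Icc.2 h, rfl⟩

omit hK in
lemma arc_union {s t r : ℝ} (h1 : s ≤ t) (h2 : t ≤ r) :
    arcK (K := K) s r = arcK (K := K) s t ∪ arcK (K := K) t r := by
  unfold arcK
  rw [← Set.image_union, Icc_union_Icc_eq_Icc h1 h2]

lemma arc_inter_subset {s t r : ℝ} (h1 : s ≤ t) (h2 : t ≤ r) (h3 : r - s < 2 * π) :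
    arcK (K := K) s t ∩ arcK (K := K) t r ⊆ {bphi (K := K) t} := by
  rintro z ⟨⟨θ1, hθ1, rfl⟩, ⟨θ2, hθ2, hz2⟩⟩
  have heq : θ2 = θ1 := by
    apply bphi_inj hK hz2
    have := hθ1.1; have := hθ1.2; have := hθ2.1; have := hθ2.2
    rw [abs_lt]; constructor <;> linarith
  have h4 : θ1 = t := le_antisymm hθ1.2 (heq ▸ hθ2.1)
  rw [h4]; rfl

lemma arc_antipode {s t : ℝ} (h : t - s < π) {z : Plane}
    (hz : z ∈ arcK (K := K) s t) : -z ∉ arcK (K := K) s t := by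
  rintro ⟨θ2, hθ2, hz2⟩
  obtain ⟨θ1, hθ1, rfl⟩ := hz
  have h5 : bphi (K := K) (θ1 + π) = bphi (K := K) θ2 := by
    rw [bphi_add_pi hK, hz2]
  have hpi := Real.pi_pos
  have heq : θ1 + π = θ2 := by
    apply bphi_inj hK h5
    have := hθ1.1; have := hθ1.2; have := hθ2.1; have := hθ2.2
    rw [abs_lt]; constructor <;> linarith
  have := hθ1.1; have := hθ1.2; have := hθ2.1; have := hθ2.2
  linarith

/-- arcs are B-arcs -/
lemma isBArc_arc {s t : ℝ} (h1 : s < t) (h2 : t - s < π) :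
    IsBArc K (arcK (K := K) s t) (bphi (K := K) s) (bphi (K := K) t) := by
  have hpi := Real.pi_pos
  refine ⟨arc_sub_frontier hK s t, arc_closed hK s t, arc_preconnected hK s t,
    mem_arc_left h1.le, mem_arc_right h1.le, fun z hz => arc_antipode hK h2 hz, ?_⟩
  intro C' hsub hC'closed hC'conn hxC' hyC'
  by_contra hne
  have hssub : C' ⊂ arcK (K := K) s t := ⟨hsub, fun h => hne (le_antisymm hsub h)⟩
  obtain ⟨z, hzarc, hznot⟩ := exists_of_ssubset hssub
  obtain ⟨θ, hθ, rfl⟩ := hzarc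
  -- split the arc at θ
  set A := arcK (K := K) s θ with hA
  set B := arcK (K := K) θ t with hB
  have hunion : arcK (K := K) s t = A ∪ B := arc_union hθ.1 hθ.2
  have hinter : A ∩ B ⊆ {bphi (K := K) θ} := arc_inter_subset hK hθ.1 hθ.2 (by linarith)
  -- C' ⊆ Bᶜ ∪ Aᶜ, open sets, disjoint on C'
  have hCsub : C' ⊆ Bᶜ ∪ Aᶜ := by
    intro w hw
    have hwarc := hsub hw
    rw [hunion] at hwarc
    have hwne : w ≠ bphi (K := K) θ := fun h => hznot (h ▸ hw)
    rcases hwarc with hwA | hwB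
    · left; intro hwB; exact hwne (hinter ⟨hwA, hwB⟩)
    · right; intro hwA; exact hwne (hinter ⟨hwA, hwB⟩)
  have hdisj : C' ∩ (Bᶜ ∩ Aᶜ) = ∅ := by
    apply Set.eq_empty_iff_forall_notMem.2
    rintro w ⟨hw, hwB, hwA⟩
    have hwarc := hsub hw
    rw [hunion] at hwarc
    rcases hwarc with h | h
    · exact hwA h
    · exact hwB h
  have hθs : θ ≠ s := by
    rintro rfl; exact hznot hxC'
  have hθt : θ ≠ t := by
    rintro rfl; exact hznot hyC'
  have hpi := Real.pi_pos
  have hsB : bphi (K := K) s ∈ Bᶜ := by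
    rintro ⟨θ', hθ', hb⟩
    have heq : θ' = s := by
      apply bphi_inj hK hb
      have := hθ'.1; have := hθ'.2; have := hθ.1; have := hθ.2
      rw [abs_lt]; constructor <;> linarith
    have h1 : θ ≤ s := heq ▸ hθ'.1
    exact hθs (le_antisymm h1 hθ.1)
  have htA : bphi (K := K) t ∈ Aᶜ := by
    rintro ⟨θ', hθ', hb⟩
    have heq : θ' = t := by
      apply bphi_inj hK hb
      have := hθ'.1; have := hθ'.2; have := hθ.1; have := hθ.2
      rw [abs_lt]; constructor <;> linarith
    have h1 : t ≤ θ := heq ▸ hθ'.2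
    exact hθt (le_antisymm hθ.2 h1)
  obtain ⟨w, hw⟩ := hC'conn Bᶜ Aᶜ (arc_closed hK θ t).isOpen_compl
    (arc_closed hK s θ).isOpen_compl hCsub ⟨bphi (K := K) s, hxC', hsB⟩
    ⟨bphi (K := K) t, hyC', htA⟩
  rw [Set.eq_empty_iff_forall_notMem] at hdisj
  exact hdisj w hw

omit hK in
lemma borth_neg_right {x y : Plane} (h : BOrth K x y) : BOrth K x (-y) := by
  intro t
  have := h (-t)
  simpa [smul_neg, neg_smul] using this

lemma borth_neg_left {x y : Plane} (h : BOrth K x y) : BOrth K (-x) y := by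
  intro t
  rw [gauge_symm hK]
  have h2 : -x + t • y = -(x + (-t) • y) := by
    rw [neg_smul]; abel
  rw [h2, gauge_symm hK]
  exact h (-t)

lemma borth_limit {x y : Plane} {xn yn : ℕ → Plane}
    (hx : Filter.Tendsto xn Filter.atTop (nhds x))
    (hy : Filter.Tendsto yn Filter.atTop (nhds y))
    (h : ∀ n, BOrth K (xn n) (yn n)) : BOrth K x y := by
  intro t
  have h1 : Filter.Tendsto (fun n => gauge K (xn n)) Filter.atTop (nhds (gauge K x)) :=
    ((gauge_cont hK).tendsto x).comp hx
  have h2 : Filter.Tendsto (fun n => gauge K (xn n + t • yn n)) Filter.atTop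
      (nhds (gauge K (x + t • y))) := by
    apply ((gauge_cont hK).tendsto _).comp
    exact hx.add (hy.const_smul t)
  exact le_of_tendsto_of_tendsto' h1 h2 (fun n => h n t)

lemma frontier_not_interior {x : Plane} (hx : x ∈ frontier K) : x ∉ interior K := by
  intro h
  rw [mem_frontier_iff hK] at hx
  rw [mem_interior_iff hK] at h
  linarith

/-- existence of a forward orthogonal direction -/
lemma exists_orth_fwd (s : ℝ) :
    ∃ t ∈ Ioo s (s + π), BOrth K (bphi (K := K) s) (bphi (K := K) t) := by
  have hpi := Real.pi_pos
  set p := bphi (K := K) s with hp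
  have hpfr : p ∈ frontier K := bphi_mem_frontier hK s
  have hp1 : gauge K p = 1 := (mem_frontier_iff hK).1 hpfr
  have hpnotint : p ∉ interior K := frontier_not_interior hK hpfr
  obtain ⟨f, hf⟩ := geometric_hahn_banach_open_point (hK.1.interior) isOpen_interior hpnotint
  have hfp : 0 < f p := by
    have := hf 0 (zero_mem_interior hK)
    simpa using this
  have key : ∀ z : Plane, gauge K z < 1 → f z < f p := fun z hz =>
    hf z ((mem_interior_iff hK).2 hz)
  have decomp : ∀ z : Plane, f z = z.1 * f (1, 0) + z.2 * f (0, 1) := by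
    intro z
    have hz : z = z.1 • ((1, 0) : Plane) + z.2 • ((0, 1) : Plane) := by
      apply Prod.ext <;> simp
    conv_lhs => rw [hz]
    rw [map_add, f.map_smul, f.map_smul, smul_eq_mul, smul_eq_mul]
  set w : Plane := (-(f (0, 1)), f (1, 0)) with hw
  have hfw : f w = 0 := by
    rw [decomp w]
    simp [hw]; ring
  have hw0 : w ≠ 0 := by
    intro h0
    have h1 : f (0, 1) = 0 := by
      have := congrArg Prod.fst h0; rw [hw] at this; simpa using this
    have h2 : f (1, 0) = 0 := by
      have := congrArg Prod.snd h0; rw [hw] at this; simpa using this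
    have := decomp p
    rw [h1, h2] at this
    simp at this
    linarith
  have hgw : 0 < gauge K w := gauge_pos hK hw0
  set y : Plane := (gauge K w)⁻¹ • w with hy
  have hy1 : gauge K y = 1 := by
    rw [hy, gauge_smul_of_nonneg (le_of_lt (inv_pos.2 hgw)), smul_eq_mul,
      inv_mul_cancel₀ (ne_of_gt hgw)]
  have hyfr : y ∈ frontier K := (mem_frontier_iff hK).2 hy1
  have hfy : f y = 0 := by rw [hy, f.map_smul, hfw, smul_eq_mul, mul_zero]
  have horth : BOrth K p y := by
    intro t
    rw [hp1]
    by_contra hlt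
    push_neg at hlt
    have h3 := key _ hlt
    rw [map_add, f.map_smul, hfy, smul_eq_mul, mul_zero, add_zero] at h3
    exact lt_irrefl _ h3
  obtain ⟨θ, hθmem, hθ⟩ := bphi_surj hK hyfr s
  have hθs : θ ≠ s := by
    rintro rfl
    rw [← hθ, ← hp] at hfy
    linarith
  have hθspi : θ ≠ s + π := by
    rintro rfl
    rw [bphi_add_pi hK] at hθ
    have hyp : y = -p := by rw [← hθ, hp]
    rw [hyp, map_neg] at hfy
    linarith
  rcases lt_or_ge θ (s + π) with hcase | hcase
  · exact ⟨θ, ⟨lt_of_le_of_ne hθmem.1 (Ne.symm hθs), hcase⟩, hθ ▸ horth⟩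
  · refine ⟨θ - π, ⟨by cases lt_or_eq_of_le hcase with
      | inl h => linarith
      | inr h => exact absurd h.symm hθspi, by linarith [hθmem.2]⟩, ?_⟩
    have hbθ : bphi (K := K) (θ - π) = - y := by
      have := bphi_add_pi hK (K := K) (θ - π)
      rw [sub_add_cancel, hθ] at this
      rw [← neg_eq_iff_eq_neg] at this
      rw [← this]
    rw [hbθ]
    exact borth_neg_right horth

/-- existence of a backward orthogonal point: points orthogonal *to* a direction -/
lemma exists_orth_bwd (t : ℝ) :
    ∃ s ∈ Ioo (t - π) t, BOrth K (bphi (K := K) s) (bphi (K := K) t) := by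
  have hpi := Real.pi_pos
  set v := bphi (K := K) t with hv
  have hvfr : v ∈ frontier K := bphi_mem_frontier hK t
  have hv0 : v ≠ 0 := bphi_ne_zero hK t
  obtain ⟨u, huK, hmax⟩ := hK.2.1.exists_isMaxOn
    ⟨0, interior_subset (zero_mem_interior hK)⟩ (crossP_continuous v).continuousOn
  have hmax' : ∀ x ∈ K, crossP v x ≤ crossP v u := fun x hx => hmax hx
  set w' : Plane := (-v.2, v.1) with hw'
  have hcross : crossP v w' = v.1 ^ 2 + v.2 ^ 2 := by
    simp [crossP, hw']; ring
  have hcw : 0 < crossP v w' := by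
    rw [hcross]
    rcases Prod.ext_iff.not.1 hv0 with h
    have : v.1 ≠ 0 ∨ v.2 ≠ 0 := by
      by_contra hc; push_neg at hc
      exact hv0 (Prod.ext hc.1 hc.2)
    rcases this with h | h <;> positivity
  obtain ⟨ε, hε, hball⟩ := Metric.mem_nhds_iff.1 (K_nhds hK)
  have hsmall : ∀ (z : Plane) (ρ : ℝ), 0 < ρ →
      dist (z + (ρ / (2 * (‖w'‖ + 1))) • w') z < ρ := by
    intro z ρ hρ
    rw [dist_eq_norm, add_sub_cancel_left, norm_smul]
    rw [Real.norm_eq_abs, abs_of_pos (by positivity)]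
    rw [div_mul_eq_mul_div, div_lt_iff₀ (by positivity)]
    nlinarith [norm_nonneg w']
  set M := crossP v u with hM
  have hMpos : 0 < M := by
    have hmem : (ε / (2 * (‖w'‖ + 1))) • w' ∈ K := by
      apply hball
      rw [Metric.mem_ball]
      have := hsmall 0 ε hε
      simpa using this
    have h1 := hmax' _ hmem
    rw [crossP_smul_right] at h1
    calc (0:ℝ) < (ε / (2 * (‖w'‖ + 1))) * crossP v w' := by positivity
    _ ≤ M := h1
  have claim : ∀ z : Plane, crossP v z = M → z ∉ interior K := by
    intro z hz hint
    obtain ⟨ρ, hρ, hballz⟩ := Metric.isOpen_iff.1 isOpen_interior z hint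
    have hmem : z + (ρ / (2 * (‖w'‖ + 1))) • w' ∈ K := by
      apply interior_subset
      apply hballz
      rw [Metric.mem_ball]
      exact hsmall z ρ hρ
    have h1 := hmax' _ hmem
    rw [crossP_add_right, crossP_smul_right, hz] at h1
    have hδ : 0 < ρ / (2 * (‖w'‖ + 1)) := by positivity
    nlinarith [mul_pos hδ hcw]
  have hufr : u ∈ frontier K := by
    rw [frontier, hK.2.1.isClosed.closure_eq]
    exact ⟨huK, claim u rfl⟩
  have hu1 : gauge K u = 1 := (mem_frontier_iff hK).1 hufr
  have horth : BOrth K u v := by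
    intro lam
    rw [hu1]
    by_contra hlt
    push_neg at hlt
    have hint := (mem_interior_iff hK).2 hlt
    apply claim (u + lam • v) _ hint
    rw [crossP_add_right, crossP_smul_right, crossP_self, mul_zero, add_zero]
  obtain ⟨σ, hσmem, hσ⟩ := bphi_surj hK hufr (t - π)
  rw [show t - π + 2 * π = t + π by ring] at hσmem
  have hσne1 : σ ≠ t - π := by
    rintro rfl
    have h2 : bphi (K := K) (t - π + π) = - bphi (K := K) (t - π) := bphi_add_pi hK _
    rw [sub_add_cancel, ← hv, hσ] at h2
    have hM0 : M = 0 := by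
      rw [hM]
      nth_rewrite 1 [h2]
      rw [crossP_neg_left, crossP_self, neg_zero]
    linarith
  have hσne2 : σ ≠ t := by
    rintro rfl
    rw [← hv] at hσ
    have : M = 0 := by rw [hM, hσ, crossP_self]
    linarith
  rcases lt_or_ge σ t with hcase | hcase
  · exact ⟨σ, ⟨lt_of_le_of_ne hσmem.1 (Ne.symm hσne1), hcase⟩, hσ ▸ horth⟩
  · have hσgt : t < σ := lt_of_le_of_ne hcase (Ne.symm hσne2)
    refine ⟨σ - π, ⟨by linarith, by linarith [hσmem.2]⟩, ?_⟩
    have hbθ : bphi (K := K) (σ - π) = - u := by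
      have := bphi_add_pi hK (K := K) (σ - π)
      rw [sub_add_cancel, hσ] at this
      rw [← neg_eq_iff_eq_neg] at this
      rw [← this]
    rw [hbθ]
    exact borth_neg_left hK horth

omit hK in
lemma sin_pos_of_window {x : ℝ} (h1 : -π < x) (h2 : x < 2 * π) (hs : 0 < Real.sin x) :
    0 < x ∧ x < π := by
  have hpi := Real.pi_pos
  constructor
  · by_contra h
    push_neg at h
    have : Real.sin (-x) ≥ 0 := Real.sin_nonneg_of_nonneg_of_le_pi (by linarith) (by linarith)
    rw [Real.sin_neg] at this
    linarith
  · by_contra h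
    push_neg at h
    have h3 : Real.sin (x - π) ≥ 0 :=
      Real.sin_nonneg_of_nonneg_of_le_pi (by linarith) (by linarith)
    rw [Real.sin_sub_pi] at h3
    linarith

lemma sin_pos_of_crossP_bphi {a b : ℝ} (h : 0 < crossP (bphi (K := K) a) (bphi (K := K) b)) :
    0 < Real.sin (b - a) := by
  rw [crossP_bphi] at h
  set A := (gauge K (Real.cos a, Real.sin a))⁻¹ with hA
  set B := (gauge K (Real.cos b, Real.sin b))⁻¹ with hB
  have hA0 : 0 < A := inv_pos.2 (gauge_unitv_pos hK a)
  have hB0 : 0 < B := inv_pos.2 (gauge_unitv_pos hK b)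
  by_contra hs
  push_neg at hs
  have : A * B * Real.sin (b - a) ≤ 0 :=
    mul_nonpos_of_nonneg_of_nonpos (le_of_lt (mul_pos hA0 hB0)) hs
  linarith

/-- frontier points in the open cone between two directions lie on the arc -/
lemma cone_arc {α β : ℝ} (h1 : α < β) (h2 : β - α < π) {z : Plane}
    (hz : z ∈ frontier K) (hc1 : 0 < crossP (bphi (K := K) α) z)
    (hc2 : 0 < crossP z (bphi (K := K) β)) : z ∈ arcK (K := K) α β := by
  have hpi := Real.pi_pos
  obtain ⟨θ, hθmem, rfl⟩ := bphi_surj hK hz α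
  have hs1 : 0 < Real.sin (θ - α) := sin_pos_of_crossP_bphi hK hc1
  have hw1 := sin_pos_of_window (x := θ - α) (by linarith [hθmem.1]) (by linarith [hθmem.2]) hs1
  have hs2 : 0 < Real.sin (β - θ) := sin_pos_of_crossP_bphi hK hc2
  have hw2 := sin_pos_of_window (x := β - θ) (by linarith [hw1.2]) (by linarith [hw1.1]) hs2
  exact ⟨θ, ⟨by linarith [hw1.1], by linarith [hw2.1]⟩, rfl⟩

omit hK in
lemma isBArc_swap {C : Set Plane} {x y : Plane} (h : IsBArc K C x y) : IsBArc K C y x := by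
  obtain ⟨a, b, c, d, e, f, g⟩ := h
  exact ⟨a, b, c, e, d, f, fun C' h1 h2 h3 hy hx => g C' h1 h2 h3 hx hy⟩

section Meas

variable {μ : Measure Plane} (hμ : IsBMeasure K μ)

include hμ

omit hK in
lemma mu_univ_ne_top : μ Set.univ ≠ ⊤ := by
  have h1 : μ Set.univ ≤ μ (frontier K) + μ (frontier K)ᶜ := by
    rw [← Set.union_compl_self (frontier K)]
    exact measure_union_le _ _
  rw [hμ.1.1, hμ.1.2.1, add_zero] at h1
  exact ne_top_of_le_ne_top ENNReal.ofReal_ne_top h1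

omit hK in
lemma mu_arc_ne_top (s t : ℝ) : μ (arcK (K := K) s t) ≠ ⊤ :=
  ne_top_of_le_ne_top (mu_univ_ne_top hμ) (measure_mono (Set.subset_univ _))

omit hμ in
lemma arc_neg_eq (s t : ℝ) :
    arcK (K := K) (s + π) (t + π) = - arcK (K := K) s t := by
  ext z
  simp only [Set.mem_neg]
  constructor
  · rintro ⟨θ, hθ, rfl⟩
    refine ⟨θ - π, ⟨by linarith [hθ.1], by linarith [hθ.2]⟩, ?_⟩
    have := bphi_add_pi hK (K := K) (θ - π)
    rw [sub_add_cancel] at this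
    rw [this, neg_neg]
  · rintro ⟨θ, hθ, hb⟩
    refine ⟨θ + π, ⟨by linarith [hθ.1], by linarith [hθ.2]⟩, ?_⟩
    rw [bphi_add_pi hK, hb, neg_neg]

/-- additivity of arc measures -/
lemma arc_add {s t r : ℝ} (h1 : s ≤ t) (h2 : t ≤ r) (h3 : r - s ≤ 2 * π) :
    μ (arcK (K := K) s r) = μ (arcK (K := K) s t) + μ (arcK (K := K) t r) := by
  set A := arcK (K := K) s t with hA
  set B := arcK (K := K) t r with hB
  have hinter : B ∩ A ⊆ {bphi (K := K) t} ∪ {bphi (K := K) s} := by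
    rintro z ⟨⟨θ2, hθ2, rfl⟩, ⟨θ1, hθ1, hz1⟩⟩
    rcases lt_or_eq_of_le (abs_le.2 ⟨by linarith [hθ1.1, hθ2.2], by
        linarith [hθ1.2, hθ2.1]⟩ : |θ1 - θ2| ≤ 2 * π) with hlt | heq
    · have h4 := bphi_inj hK hz1 hlt
      have h5 : θ2 = t := le_antisymm (h4 ▸ hθ1.2) hθ2.1
      left; rw [h5]; rfl
    · rw [abs_eq (by positivity)] at heq
      rcases heq with h4 | h4
      · have := hθ1.2; have := hθ2.1; have hpi := Real.pi_pos; linarith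
      · -- θ1 - θ2 = -2π: θ1 = s, θ2 = r = s + 2π
        have hθ1s : θ1 = s := by
          have := hθ1.1; have := hθ2.2; linarith
        have hθ2r : θ2 = s + 2 * π := by
          have := hθ1.1; have := hθ2.2; linarith
        right
        have : bphi (K := K) θ2 = bphi (K := K) s := by
          rw [hθ2r]
          exact (bphi_periodic (K := K)) s
        rw [this]; rfl
  have hinter0 : μ (B ∩ A) = 0 := by
    have h4 : μ (B ∩ A) ≤ μ {bphi (K := K) t} + μ {bphi (K := K) s} :=
      le_trans (measure_mono hinter) (measure_union_le _ _)
    rw [hμ.1.2.2.2, hμ.1.2.2.2, add_zero] at h4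
    exact le_antisymm h4 zero_le
  have hBA : μ (B \ A) = μ B := by
    apply le_antisymm (measure_mono Set.diff_subset)
    calc μ B ≤ μ ((B \ A) ∪ (B ∩ A)) := by
          apply measure_mono
          intro z hz
          by_cases hzA : z ∈ A
          · exact Or.inr ⟨hz, hzA⟩
          · exact Or.inl ⟨hz, hzA⟩
        _ ≤ μ (B \ A) + μ (B ∩ A) := measure_union_le _ _
        _ = μ (B \ A) := by rw [hinter0, add_zero]
  have hunion : arcK (K := K) s r = A ∪ B \ A := by
    rw [Set.union_diff_self, hA, hB, ← arc_union h1 h2]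
  rw [hunion]
  rw [measure_union (Set.disjoint_sdiff_right)
    ((arc_measurable hK t r).diff (arc_measurable hK s t))]
  rw [hBA]

lemma arc_total (s : ℝ) : μ (arcK (K := K) s (s + 2 * π)) = ENNReal.ofReal (2 * π) := by
  have heq : arcK (K := K) s (s + 2 * π) = frontier K := by
    apply le_antisymm (arc_sub_frontier hK s _)
    intro z hz
    obtain ⟨θ, hθ, rfl⟩ := bphi_surj hK hz s
    exact ⟨θ, ⟨hθ.1, le_of_lt hθ.2⟩, rfl⟩
  rw [heq, hμ.1.1]

lemma arc_half (s : ℝ) : μ (arcK (K := K) s (s + π)) = ENNReal.ofReal π := by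
  have hpi := Real.pi_pos
  have hsplit := arc_add hK hμ (s := s) (t := s + π) (r := s + 2 * π)
    (by linarith) (by linarith) (by linarith)
  have hneg : arcK (K := K) (s + π) (s + 2 * π) = - arcK (K := K) s (s + π) := by
    have := arc_neg_eq hK (K := K) s (s + π)
    rw [show s + π + π = s + 2 * π by ring] at this
    exact this
  rw [hneg, hμ.1.2.2.1 (arcK (K := K) s (s + π)), arc_total hK hμ] at hsplit
  set a := μ (arcK (K := K) s (s + π)) with ha
  have hane : a ≠ ⊤ := mu_arc_ne_top hμ _ _
  have htr : (ENNReal.ofReal (2 * π)).toReal = a.toReal + a.toReal := by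
    rw [hsplit, ENNReal.toReal_add hane hane]
  rw [ENNReal.toReal_ofReal (by positivity)] at htr
  have hat : a.toReal = π := by linarith
  rw [← ENNReal.ofReal_toReal hane, hat]

lemma arc_orth_measure {s t : ℝ} (h1 : s < t) (h2 : t - s < π)
    (horth : BOrth K (bphi (K := K) s) (bphi (K := K) t)
      ∨ BOrth K (bphi (K := K) t) (bphi (K := K) s)) :
    μ (arcK (K := K) s t) = ENNReal.ofReal (π / 2) := by
  have harc := isBArc_arc hK h1 h2
  rcases horth with h | h
  · exact hμ.2 _ _ _ harc h
  · exact hμ.2 _ _ _ (isBArc_swap harc) h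

/-- points of the measure-theoretic support give positive measure to
surrounding arcs -/
lemma supp_cone_pos {α β : ℝ} (h1 : α < β) (h2 : β - α < π) {p : Plane}
    (hp : p ∈ {x | ∀ U : Set Plane, IsOpen U → x ∈ U → 0 < μ U})
    (hc1 : 0 < crossP (bphi (K := K) α) p) (hc2 : 0 < crossP p (bphi (K := K) β)) :
    0 < μ (arcK (K := K) α β) := by
  set U := {z : Plane | 0 < crossP (bphi (K := K) α) z ∧ 0 < crossP z (bphi (K := K) β)}
    with hU
  have hopen : IsOpen U := by
    apply IsOpen.inter
    · exact isOpen_lt continuous_const (crossP_continuous _)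
    · exact isOpen_lt continuous_const (crossP_continuous' _)
  have hpU : p ∈ U := ⟨hc1, hc2⟩
  have hpos := hp U hopen hpU
  have hsub : U ⊆ arcK (K := K) α β ∪ (frontier K)ᶜ := by
    intro z hz
    by_cases hzf : z ∈ frontier K
    · exact Or.inl (cone_arc hK h1 h2 hzf hz.1 hz.2)
    · exact Or.inr hzf
  have h3 : μ U ≤ μ (arcK (K := K) α β) + μ (frontier K)ᶜ :=
    le_trans (measure_mono (μ := μ) hsub) (measure_union_le _ _)
  rw [hμ.1.2.1, add_zero] at h3
  exact lt_of_lt_of_le hpos h3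

/-- left arcs shrink to zero measure -/
lemma tendsto_arc_left (s₀ : ℝ) {δ : ℕ → ℝ} (hδpos : ∀ n, 0 < δ n) (hδ1 : δ 0 ≤ 1)
    (hanti : Antitone δ) (hδto : Filter.Tendsto δ Filter.atTop (nhds 0)) :
    Filter.Tendsto (fun n => μ (arcK (K := K) (s₀ - δ n) s₀)) Filter.atTop (nhds 0) := by
  have hpi := Real.pi_gt_three
  have hiInter : ⋂ n, arcK (K := K) (s₀ - δ n) s₀ = {bphi (K := K) s₀} := by
    apply le_antisymm
    · intro z hz
      simp only [Set.mem_iInter] at hz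
      obtain ⟨θ0, hθ0, hz0⟩ := hz 0
      have hθeq : ∀ n, s₀ - δ n ≤ θ0 := by
        intro n
        obtain ⟨θn, hθn, hzn⟩ := hz n
        have : θn = θ0 := by
          apply bphi_inj hK (hzn.trans hz0.symm)
          have h1 := hθn.1; have h2 := hθn.2; have h3 := hθ0.1; have h4 := hθ0.2
          have h5 := hδpos n; have h6 := hδpos 0
          have h7 : δ n ≤ δ 0 := hanti (Nat.zero_le n)
          rw [abs_lt]; constructor <;> linarith
        rw [← this]; exact hθn.1
      have hθ0eq : θ0 = s₀ := by
        apply le_antisymm hθ0.2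
        have h8 : Filter.Tendsto (fun n => s₀ - δ n) Filter.atTop (nhds (s₀ - 0)) :=
          hδto.const_sub s₀
        rw [sub_zero] at h8
        exact le_of_tendsto' h8 hθeq
      rw [← hz0, hθ0eq]; rfl
    · intro z hz
      simp only [Set.mem_singleton_iff] at hz
      simp only [Set.mem_iInter]
      intro n
      rw [hz]
      exact mem_arc_right (by linarith [hδpos n])
  have htend := tendsto_measure_iInter_atTop (μ := μ)
    (s := fun n => arcK (K := K) (s₀ - δ n) s₀)
    (fun n => (arc_measurable hK _ _).nullMeasurableSet)
    (fun n m hnm => arc_mono (by linarith [hanti hnm]) le_rfl)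
    ⟨0, mu_arc_ne_top hμ _ _⟩
  rw [hiInter, hμ.1.2.2.2] at htend
  exact htend

/-- right arcs shrink to zero measure -/
lemma tendsto_arc_right (s₀ : ℝ) {δ : ℕ → ℝ} (hδpos : ∀ n, 0 < δ n) (hδ1 : δ 0 ≤ 1)
    (hanti : Antitone δ) (hδto : Filter.Tendsto δ Filter.atTop (nhds 0)) :
    Filter.Tendsto (fun n => μ (arcK (K := K) s₀ (s₀ + δ n))) Filter.atTop (nhds 0) := by
  have hpi := Real.pi_gt_three
  have hiInter : ⋂ n, arcK (K := K) s₀ (s₀ + δ n) = {bphi (K := K) s₀} := by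
    apply le_antisymm
    · intro z hz
      simp only [Set.mem_iInter] at hz
      obtain ⟨θ0, hθ0, hz0⟩ := hz 0
      have hθeq : ∀ n, θ0 ≤ s₀ + δ n := by
        intro n
        obtain ⟨θn, hθn, hzn⟩ := hz n
        have : θn = θ0 := by
          apply bphi_inj hK (hzn.trans hz0.symm)
          have h1 := hθn.1; have h2 := hθn.2; have h3 := hθ0.1; have h4 := hθ0.2
          have h5 := hδpos n; have h6 := hδpos 0
          have h7 : δ n ≤ δ 0 := hanti (Nat.zero_le n)
          rw [abs_lt]; constructor <;> linarith
        rw [← this]; exact hθn.2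
      have hθ0eq : θ0 = s₀ := by
        apply le_antisymm _ hθ0.1
        have h8 : Filter.Tendsto (fun n => s₀ + δ n) Filter.atTop (nhds (s₀ + 0)) :=
          hδto.const_add s₀
        rw [add_zero] at h8
        exact ge_of_tendsto' h8 hθeq
      rw [← hz0, hθ0eq]; rfl
    · intro z hz
      simp only [Set.mem_singleton_iff] at hz
      simp only [Set.mem_iInter]
      intro n
      rw [hz]
      exact mem_arc_left (by linarith [hδpos n])
  have htend := tendsto_measure_iInter_atTop (μ := μ)
    (s := fun n => arcK (K := K) s₀ (s₀ + δ n))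
    (fun n => (arc_measurable hK _ _).nullMeasurableSet)
    (fun n m hnm => arc_mono le_rfl (by linarith [hanti hnm]))
    ⟨0, mu_arc_ne_top hμ _ _⟩
  rw [hiInter, hμ.1.2.2.2] at htend
  exact htend

omit hμ in
/-- supporting functionals bound the body -/
lemma f_le_on_K {f : Plane →L[ℝ] ℝ} {p : Plane} (hfp : 0 < f p)
    (key : ∀ z : Plane, gauge K z < 1 → f z < f p) :
    ∀ x ∈ K, f x ≤ f p := by
  intro x hxK
  by_contra h
  push_neg at h
  set t := (f x - f p) / (2 * f x) with ht
  have hfx : 0 < f x := lt_trans hfp h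
  have ht1 : 0 < t := div_pos (by linarith) (by linarith)
  have ht2 : t < 1 := by
    rw [ht, div_lt_one (by positivity)]; linarith
  have hx1 : gauge K x ≤ 1 := (mem_K_iff hK).1 hxK
  have hgz : gauge K ((1 - t) • x) < 1 := by
    rw [gauge_smul_of_nonneg (by linarith)]
    rw [smul_eq_mul]
    nlinarith
  have h4 := key _ hgz
  rw [f.map_smul, smul_eq_mul] at h4
  have : (1 - t) * f x = (f x + f p) / 2 := by
    rw [ht]; field_simp; ring
  rw [this] at h4
  linarith

/-- Part A core: if p is in the support and in an open segment (positively
oriented) of the frontier, contradiction -/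
lemma seg_core {p a b : Plane} (hm : ∀ U : Set Plane, IsOpen U → p ∈ U → 0 < μ U)
    (hab : a ≠ b) (hseg : segment ℝ a b ⊆ frontier K)
    (hopen : p ∈ openSegment ℝ a b) (hcr : 0 < crossP a b) : False := by
  have hpi := Real.pi_pos
  have hafr : a ∈ frontier K := hseg (left_mem_segment ℝ a b)
  have hbfr : b ∈ frontier K := hseg (right_mem_segment ℝ a b)
  have hpfr : p ∈ frontier K := hseg (openSegment_subset_segment ℝ a b hopen)
  obtain ⟨u, v, hu, hv, huv, hpeq⟩ := hopen
  -- angles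
  obtain ⟨α, hαmem, hbpa⟩ := bphi_surj hK hafr 0
  obtain ⟨β, hβmem, hbpb⟩ := bphi_surj hK hbfr α
  have hsab : 0 < Real.sin (β - α) := by
    apply sin_pos_of_crossP_bphi hK
    rw [hbpa, hbpb]; exact hcr
  have hwab := sin_pos_of_window (x := β - α) (by linarith [hβmem.1]) (by linarith [hβmem.2]) hsab
  -- supporting functional at p
  have hpnotint : p ∉ interior K := frontier_not_interior hK hpfr
  obtain ⟨f, hf⟩ := geometric_hahn_banach_open_point (hK.1.interior) isOpen_interior hpnotint
  have hfp : 0 < f p := by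
    have := hf 0 (zero_mem_interior hK)
    simpa using this
  have key : ∀ z : Plane, gauge K z < 1 → f z < f p := fun z hz =>
    hf z ((mem_interior_iff hK).2 hz)
  have hle := f_le_on_K hK hfp key
  have hfa : f a ≤ f p := hle a ((mem_K_iff hK).2 (le_of_eq ((mem_frontier_iff hK).1 hafr)))
  have hfb : f b ≤ f p := hle b ((mem_K_iff hK).2 (le_of_eq ((mem_frontier_iff hK).1 hbfr)))
  have hfpeq : f p = u * f a + v * f b := by
    rw [← hpeq, map_add, f.map_smul, f.map_smul, smul_eq_mul, smul_eq_mul]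
  have hfaeq : f a = f p := by nlinarith
  have hfbeq : f b = f p := by nlinarith
  -- orthogonal direction y parallel to b - a
  set c : Plane := b - a with hc
  have hc0 : c ≠ 0 := sub_ne_zero.2 (Ne.symm hab)
  have hgc : 0 < gauge K c := gauge_pos hK hc0
  set y : Plane := (gauge K c)⁻¹ • c with hy
  have hy1 : gauge K y = 1 := by
    rw [hy, gauge_smul_of_nonneg (le_of_lt (inv_pos.2 hgc)), smul_eq_mul,
      inv_mul_cancel₀ (ne_of_gt hgc)]
  have hyfr : y ∈ frontier K := (mem_frontier_iff hK).2 hy1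
  have hfc : f c = 0 := by rw [hc, map_sub]; linarith
  have hfy : f y = 0 := by rw [hy, f.map_smul, hfc, smul_eq_mul, mul_zero]
  have horth : ∀ x : Plane, f x = f p → gauge K x = 1 → BOrth K x y := by
    intro x hfx hgx t
    rw [hgx]
    by_contra hlt
    push_neg at hlt
    have h4 := key _ hlt
    rw [map_add, f.map_smul, hfy, smul_eq_mul, mul_zero, add_zero, hfx] at h4
    exact lt_irrefl _ h4
  have hortha : BOrth K a y := horth a hfaeq ((mem_frontier_iff hK).1 hafr)
  have horthb : BOrth K b y := horth b hfbeq ((mem_frontier_iff hK).1 hbfr)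
  -- crosses with y
  have hcac : crossP a c = crossP a b := by
    rw [hc, show b - a = b + -a by ring, crossP_add_right, crossP_neg, crossP_self]
    ring
  have hcbc : crossP b c = crossP a b := by
    rw [hc, show b - a = b + -a by ring, crossP_add_right, crossP_neg, crossP_self,
      crossP_anti b a]
    ring
  have hcay : 0 < crossP a y := by
    rw [hy, crossP_smul_right, hcac]; positivity
  have hcby : 0 < crossP b y := by
    rw [hy, crossP_smul_right, hcbc]; positivity
  -- angle of y
  obtain ⟨γ, hγmem, hbpy⟩ := bphi_surj hK hyfr β
  have hsby : 0 < Real.sin (γ - β) := by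
    apply sin_pos_of_crossP_bphi hK
    rw [hbpb, hbpy]; exact hcby
  have hwby := sin_pos_of_window (x := γ - β) (by linarith [hγmem.1]) (by linarith [hγmem.2]) hsby
  have hsay : 0 < Real.sin (γ - α) := by
    apply sin_pos_of_crossP_bphi hK
    rw [hbpa, hbpy]; exact hcay
  have hway := sin_pos_of_window (x := γ - α) (by linarith [hwby.1, hwab.1])
    (by linarith [hwby.2, hwab.2]) hsay
  -- measures
  have hm1 : μ (arcK (K := K) α γ) = ENNReal.ofReal (π / 2) := by
    apply arc_orth_measure hK hμ (by linarith [hway.1]) (by linarith [hway.2])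
    left
    rw [hbpa, hbpy]; exact hortha
  have hm2 : μ (arcK (K := K) β γ) = ENNReal.ofReal (π / 2) := by
    apply arc_orth_measure hK hμ (by linarith [hwby.1]) (by linarith [hwby.2])
    left
    rw [hbpb, hbpy]; exact horthb
  have hsplit := arc_add hK hμ (s := α) (t := β) (r := γ)
    (by linarith [hwab.1]) (by linarith [hwby.1]) (by linarith [hway.2])
  rw [hm1, hm2] at hsplit
  have hz : μ (arcK (K := K) α β) = 0 := by
    have h5 : μ (arcK (K := K) α β) + ENNReal.ofReal (π / 2)
        = 0 + ENNReal.ofReal (π / 2) := by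
      rw [zero_add, ← hsplit]
    exact (ENNReal.add_left_inj ENNReal.ofReal_ne_top).1 h5
  -- but support gives positive measure
  have hpos : 0 < μ (arcK (K := K) α β) := by
    apply supp_cone_pos hK hμ (show α < β by linarith [hwab.1]) (show β - α < π from hwab.2) hm
    · rw [hbpa, ← hpeq, crossP_add_right, crossP_smul_right, crossP_smul_right, crossP_self]
      have : u * 0 + v * crossP a b = v * crossP a b := by ring
      rw [this]
      positivity
    · rw [hbpb, ← hpeq, crossP_add_left, crossP_smul_left, crossP_smul_left, crossP_self]
      have : u * crossP a b + v * 0 = u * crossP a b := by ring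
      rw [this]
      positivity
  rw [hz] at hpos
  exact lt_irrefl _ hpos

lemma not_segunion {p : Plane}
    (hm : ∀ U : Set Plane, IsOpen U → p ∈ U → 0 < μ U) : p ∉ SegUnion K := by
  rintro ⟨a, b, hab, hseg, hopen⟩
  rcases lt_trichotomy (crossP a b) 0 with hcr | hcr | hcr
  · apply seg_core hK hμ hm (Ne.symm hab) (by rwa [segment_symm]) (by rwa [openSegment_symm])
    rw [crossP_anti]; linarith
  · -- degenerate: a, b parallel, impossible
    have hafr : a ∈ frontier K := hseg (left_mem_segment ℝ a b)
    have ha0 : a ≠ 0 := by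
      intro h
      have := (mem_frontier_iff hK).1 hafr
      rw [h, gauge_zero] at this; norm_num at this
    obtain ⟨k, hk⟩ := crossP_eq_zero_parallel ha0 hcr
    have hga : gauge K a = 1 := (mem_frontier_iff hK).1 hafr
    have hgb : gauge K b = 1 := (mem_frontier_iff hK).1 (hseg (right_mem_segment ℝ a b))
    have hgk : gauge K (k • a) = |k| * gauge K a := by
      rcases le_or_gt 0 k with h | h
      · rw [gauge_smul_of_nonneg h, smul_eq_mul, abs_of_nonneg h]
      · rw [show k • a = (-k) • (-a) by rw [neg_smul, smul_neg, neg_neg],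
          gauge_smul_of_nonneg (by linarith), smul_eq_mul, gauge_symm hK, abs_of_neg h]
    have hkabs : |k| = 1 := by
      rw [hk, hgk, hga, mul_one] at hgb
      exact hgb
    rcases (abs_eq (by norm_num : (0:ℝ) ≤ 1)).1 hkabs with hk1 | hk1
    · rw [hk1, one_smul] at hk
      exact hab hk.symm
    · rw [hk1] at hk
      have h0seg : (0 : Plane) ∈ segment ℝ a b := by
        refine ⟨1/2, 1/2, by norm_num, by norm_num, by norm_num, ?_⟩
        rw [hk]
        rw [neg_one_smul, smul_neg]
        exact add_neg_cancel _
      have := (mem_frontier_iff hK).1 (hseg h0seg)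
      rw [gauge_zero] at this
      norm_num at this
  · exact seg_core hK hμ hm hab hseg hopen hcr

omit hK hμ in
/-- abstract uniqueness of the level point approached by two families -/
lemma level_unique {g : ℝ → ENNReal} (hmono : Monotone g) {P : ENNReal} (hPtop : P ≠ ⊤)
    {x1 x2 : ℕ → ℝ} {τ1 τ2 : ℝ} {lam1 lam2 : ℕ → ENNReal}
    (hx1 : Filter.Tendsto x1 Filter.atTop (nhds τ1))
    (hx2 : Filter.Tendsto x2 Filter.atTop (nhds τ2))
    (hl1 : Filter.Tendsto lam1 Filter.atTop (nhds 0))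
    (hl2 : Filter.Tendsto lam2 Filter.atTop (nhds 0))
    (hp1 : ∀ n, 0 < lam1 n) (hp2 : ∀ n, 0 < lam2 n)
    (he1 : ∀ n, P = lam1 n + g (x1 n)) (he2 : ∀ n, P = lam2 n + g (x2 n)) :
    τ1 = τ2 := by
  have key : ∀ (x : ℕ → ℝ) (τ : ℝ) (lam : ℕ → ENNReal),
      Filter.Tendsto x Filter.atTop (nhds τ) →
      Filter.Tendsto lam Filter.atTop (nhds 0) → (∀ n, 0 < lam n) →
      (∀ n, P = lam n + g (x n)) →
      (∀ w, τ < w → P ≤ g w) ∧ (∀ w, w < τ → g w < P) := by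
    intro x τ lam hx hl hp he
    constructor
    · intro w hw
      by_cases hgw : g w = ⊤
      · rw [hgw]; exact le_top
      apply ENNReal.le_of_forall_pos_le_add
      intro ε hε _
      have hev1 : ∀ᶠ n in Filter.atTop, x n < w := hx.eventually_lt_const hw
      have hev2 : ∀ᶠ n in Filter.atTop, lam n < (ε : ENNReal) := by
        apply hl.eventually_lt_const
        exact_mod_cast hε
      obtain ⟨n, h1, h2⟩ := (hev1.and hev2).exists
      calc P = lam n + g (x n) := he n
        _ ≤ (ε : ENNReal) + g w := add_le_add h2.le (hmono h1.le)
        _ = g w + ε := add_comm _ _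
    · intro w hw
      have hev1 : ∀ᶠ n in Filter.atTop, w < x n := hx.eventually_const_lt hw
      obtain ⟨n, h1⟩ := hev1.exists
      have h2 : g (x n) < P := by
        by_contra h3
        push_neg at h3
        have h4 : P < lam n + g (x n) := by
          calc P < P + lam n := ENNReal.lt_add_right hPtop (ne_of_gt (hp n))
            _ ≤ g (x n) + lam n := add_le_add h3 le_rfl
            _ = lam n + g (x n) := add_comm _ _
        rw [← he n] at h4
        exact lt_irrefl _ h4
      exact lt_of_le_of_lt (hmono h1.le) h2
  have k1 := key x1 τ1 lam1 hx1 hl1 hp1 he1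
  have k2 := key x2 τ2 lam2 hx2 hl2 hp2 he2
  by_contra hne
  rcases lt_trichotomy τ1 τ2 with h | h | h
  · have ha := k1.1 ((τ1 + τ2) / 2) (by linarith)
    have hb := k2.2 ((τ1 + τ2) / 2) (by linarith)
    exact absurd (lt_of_le_of_lt ha hb) (lt_irrefl _)
  · exact hne h
  · have ha := k2.1 ((τ1 + τ2) / 2) (by linarith)
    have hb := k1.2 ((τ1 + τ2) / 2) (by linarith)
    exact absurd (lt_of_le_of_lt ha hb) (lt_irrefl _)

/-- Part B, left case: if all left arcs have positive measure, p is Auerbach -/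
lemma auerbach_left (s₀ : ℝ)
    (hleft : ∀ ε : ℝ, 0 < ε → ε ≤ 1 → 0 < μ (arcK (K := K) (s₀ - ε) s₀)) :
    ∃ y ∈ frontier K, BOrth K (bphi (K := K) s₀) y ∧ BOrth K y (bphi (K := K) s₀) := by
  have hpi3 := Real.pi_gt_three
  set P := ENNReal.ofReal (π / 2) with hP
  have hPpos : 0 < P := by
    rw [hP]; exact ENNReal.ofReal_pos.2 (by linarith)
  have hPtop : P ≠ ⊤ := ENNReal.ofReal_ne_top
  have hPP : P + P = ENNReal.ofReal π := by
    rw [hP, ← ENNReal.ofReal_add (by linarith) (by linarith)]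
    norm_num
  -- the base shrinking sequence
  have hδ0pos : ∀ n : ℕ, 0 < (1:ℝ) / (n + 1) := by
    intro n; positivity
  have hδ0anti : Antitone (fun n : ℕ => (1:ℝ) / (n + 1)) := by
    intro n m hnm
    have h1 : (n:ℝ) + 1 ≤ (m:ℝ) + 1 := by
      have : (n:ℝ) ≤ (m:ℝ) := by exact_mod_cast hnm
      linarith
    exact one_div_le_one_div_of_le (by positivity) h1
  have hδ0to : Filter.Tendsto (fun n : ℕ => (1:ℝ) / (n + 1)) Filter.atTop (nhds 0) :=
    tendsto_one_div_add_atTop_nhds_zero_nat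
  have htend0 := tendsto_arc_left hK hμ s₀ hδ0pos (by norm_num) hδ0anti hδ0to
  have hev : ∀ᶠ n : ℕ in Filter.atTop,
      μ (arcK (K := K) (s₀ - 1 / ((n:ℝ) + 1)) s₀) < P := htend0.eventually_lt_const hPpos
  obtain ⟨N₀, hN₀⟩ := Filter.eventually_atTop.1 hev
  set δ : ℕ → ℝ := fun n => 1 / (((n + N₀ : ℕ) : ℝ) + 1) with hδ
  have hδeq : ∀ n : ℕ, δ n = 1 / ((n:ℝ) + (N₀:ℝ) + 1) := by
    intro n; rw [hδ]; push_cast; ring_nf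
  have hδpos : ∀ n, 0 < δ n := by
    intro n; rw [hδeq]; positivity
  have hδ1 : ∀ n, δ n ≤ 1 := by
    intro n
    rw [hδeq, div_le_one (by positivity)]
    have h1 : (0:ℝ) ≤ (n:ℝ) := Nat.cast_nonneg n
    have h2 : (0:ℝ) ≤ (N₀:ℝ) := Nat.cast_nonneg N₀
    linarith
  have hδanti : Antitone δ := fun n m hnm => hδ0anti (by omega : n + N₀ ≤ m + N₀)
  set lam : ℕ → ENNReal := fun n => μ (arcK (K := K) (s₀ - δ n) s₀) with hlam
  have hlampos : ∀ n, 0 < lam n := fun n => hleft (δ n) (hδpos n) (hδ1 n)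
  have hlamlt : ∀ n, lam n < P := fun n => hN₀ (n + N₀) (by omega)
  have hlamto : Filter.Tendsto lam Filter.atTop (nhds 0) :=
    tendsto_arc_left hK hμ s₀ hδpos (hδ1 0) hδanti
      ((hδ0to.comp (Filter.tendsto_add_atTop_nat N₀)))
  have hpi : (0:ℝ) < π := by linarith
  -- the forward family t n
  have hchoice : ∀ n : ℕ, ∃ t ∈ Ioo (s₀ - δ n) (s₀ - δ n + π),
      BOrth K (bphi (K := K) (s₀ - δ n)) (bphi (K := K) t) :=
    fun n => exists_orth_fwd hK _
  choose t htmem htorth using hchoice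
  have htP : ∀ n, μ (arcK (K := K) (s₀ - δ n) (t n)) = P := by
    intro n
    exact arc_orth_measure hK hμ (htmem n).1
      (by linarith [(htmem n).2]) (Or.inl (htorth n))
  have hts : ∀ n, s₀ ≤ t n := by
    intro n
    by_contra h
    push_neg at h
    have hsub : arcK (K := K) (s₀ - δ n) (t n) ⊆ arcK (K := K) (s₀ - δ n) s₀ :=
      arc_mono le_rfl h.le
    have h2 : P ≤ lam n := by
      rw [← htP n]
      exact measure_mono hsub
    exact absurd (lt_of_le_of_lt h2 (hlamlt n)) (lt_irrefl _)
  have hteq : ∀ n, P = lam n + μ (arcK (K := K) s₀ (t n)) := by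
    intro n
    rw [← htP n]
    exact arc_add hK hμ (by linarith [hδpos n]) (hts n)
      (by have := (htmem n).2; have := hδpos n; have := hδ1 n; linarith)
  have htIcc : ∀ n, t n ∈ Icc s₀ (s₀ + π) := by
    intro n
    exact ⟨hts n, by have := (htmem n).2; have := hδpos n; linarith⟩
  obtain ⟨τ1, hτ1mem, ψ1, hψ1mono, hψ1tend⟩ := isCompact_Icc.tendsto_subseq htIcc
  -- the backward family σ n (points orthogonal to bphi (s₀ + π - δ n))
  have hchoiceσ : ∀ n : ℕ, ∃ s ∈ Ioo (s₀ + π - δ n - π) (s₀ + π - δ n),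
      BOrth K (bphi (K := K) s) (bphi (K := K) (s₀ + π - δ n)) :=
    fun n => exists_orth_bwd hK _
  choose σ hσmem hσorth using hchoiceσ
  have hσP : ∀ n, μ (arcK (K := K) (σ n) (s₀ + π - δ n)) = P := by
    intro n
    exact arc_orth_measure hK hμ (hσmem n).2
      (by have := (hσmem n).1; linarith) (Or.inl (hσorth n))
  -- the right lambda: symmetric arcs
  have hlam' : ∀ n, μ (arcK (K := K) (s₀ + π - δ n) (s₀ + π)) = lam n := by
    intro n
    have heq2 : arcK (K := K) (s₀ + π - δ n) (s₀ + π)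
        = - arcK (K := K) (s₀ - δ n) s₀ := by
      have h2 := arc_neg_eq hK (K := K) (s₀ - δ n) s₀
      rw [show s₀ - δ n + π = s₀ + π - δ n by ring] at h2
      exact h2
    rw [heq2, hμ.1.2.2.1]
  have hπsplit : ∀ n, ENNReal.ofReal π
      = μ (arcK (K := K) s₀ (s₀ + π - δ n)) + lam n := by
    intro n
    rw [← hlam' n, ← arc_half hK hμ s₀]
    exact arc_add hK hμ (by have := hδpos n; have := hδ1 n; linarith)
      (by have := hδpos n; linarith) (by linarith)
  have hσs : ∀ n, s₀ ≤ σ n := by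
    intro n
    by_contra h
    push_neg at h
    have hsub : arcK (K := K) s₀ (s₀ + π - δ n) ⊆ arcK (K := K) (σ n) (s₀ + π - δ n) :=
      arc_mono h.le le_rfl
    have h2 : μ (arcK (K := K) s₀ (s₀ + π - δ n)) ≤ P := by
      rw [← hσP n]
      exact measure_mono hsub
    have h3 : ENNReal.ofReal π < P + P := by
      rw [hπsplit n]
      exact ENNReal.add_lt_add_of_le_of_lt (ne_top_of_le_ne_top hPtop h2) h2 (hlamlt n)
    rw [hPP] at h3
    exact lt_irrefl _ h3
  have hσeq : ∀ n, P = lam n + μ (arcK (K := K) s₀ (σ n)) := by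
    intro n
    have hsplit2 : μ (arcK (K := K) s₀ (s₀ + π - δ n))
        = μ (arcK (K := K) s₀ (σ n)) + P := by
      rw [← hσP n]
      exact arc_add hK hμ (hσs n) (le_of_lt (hσmem n).2)
        (by have := hδpos n; linarith)
    have h4 : P + P = (μ (arcK (K := K) s₀ (σ n)) + P) + lam n := by
      rw [← hsplit2, ← hπsplit n, hPP]
    have h5 : P + P = (lam n + μ (arcK (K := K) s₀ (σ n))) + P := by
      rw [h4]; ring
    exact ((ENNReal.add_left_inj hPtop).1 h5.symm).symm
  have hσIcc : ∀ n, σ n ∈ Icc s₀ (s₀ + π) := by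
    intro n
    exact ⟨hσs n, by have := (hσmem n).2; have := hδpos n; linarith⟩
  obtain ⟨τ2, hτ2mem, ψ2, hψ2mono, hψ2tend⟩ := isCompact_Icc.tendsto_subseq hσIcc
  -- τ1 = τ2 via level_unique
  set g : ℝ → ENNReal := fun w => μ (arcK (K := K) s₀ (max s₀ w)) with hg
  have hgmono : Monotone g := by
    intro w w' hww
    exact measure_mono (arc_mono le_rfl (max_le_max le_rfl hww))
  have hgt : ∀ n, g (t n) = μ (arcK (K := K) s₀ (t n)) := by
    intro n; rw [hg]; simp only []; rw [max_eq_right (hts n)]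
  have hgσ : ∀ n, g (σ n) = μ (arcK (K := K) s₀ (σ n)) := by
    intro n; rw [hg]; simp only []; rw [max_eq_right (hσs n)]
  have hτeq : τ1 = τ2 := by
    refine level_unique hgmono hPtop hψ1tend hψ2tend
      (hlamto.comp hψ1mono.tendsto_atTop) (hlamto.comp hψ2mono.tendsto_atTop)
      (fun n => hlampos (ψ1 n)) (fun n => hlampos (ψ2 n)) (fun n => ?_) (fun n => ?_)
    · show P = lam (ψ1 n) + g (t (ψ1 n))
      rw [hgt (ψ1 n)]
      exact hteq (ψ1 n)
    · show P = lam (ψ2 n) + g (σ (ψ2 n))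
      rw [hgσ (ψ2 n)]
      exact hσeq (ψ2 n)
  -- limits of orthogonality
  have hδψ1 : Filter.Tendsto (fun n => s₀ - δ (ψ1 n)) Filter.atTop (nhds (s₀ - 0)) :=
    Filter.Tendsto.const_sub s₀
      ((hδ0to.comp (Filter.tendsto_add_atTop_nat N₀)).comp hψ1mono.tendsto_atTop)
  rw [sub_zero] at hδψ1
  have horth1 : BOrth K (bphi (K := K) s₀) (bphi (K := K) τ1) := by
    apply borth_limit hK (xn := fun n => bphi (K := K) (s₀ - δ (ψ1 n)))
      (yn := fun n => bphi (K := K) (t (ψ1 n)))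
    · exact ((bphi_continuous hK).tendsto _).comp hδψ1
    · exact ((bphi_continuous hK).tendsto _).comp hψ1tend
    · intro n; exact htorth (ψ1 n)
  have hδψ2 : Filter.Tendsto (fun n => s₀ + π - δ (ψ2 n)) Filter.atTop (nhds (s₀ + π - 0)) :=
    Filter.Tendsto.const_sub (s₀ + π)
      ((hδ0to.comp (Filter.tendsto_add_atTop_nat N₀)).comp hψ2mono.tendsto_atTop)
  rw [sub_zero] at hδψ2
  have horth2 : BOrth K (bphi (K := K) τ2) (bphi (K := K) (s₀ + π)) := by
    apply borth_limit hK (xn := fun n => bphi (K := K) (σ (ψ2 n)))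
      (yn := fun n => bphi (K := K) (s₀ + π - δ (ψ2 n)))
    · exact ((bphi_continuous hK).tendsto _).comp hψ2tend
    · exact ((bphi_continuous hK).tendsto _).comp hδψ2
    · intro n; exact hσorth (ψ2 n)
  -- conclude
  refine ⟨bphi (K := K) τ1, bphi_mem_frontier hK τ1, horth1, ?_⟩
  rw [hτeq]
  have h6 : BOrth K (bphi (K := K) τ2) (-(bphi (K := K) (s₀ + π))) :=
    borth_neg_right horth2
  rw [bphi_add_pi hK, neg_neg] at h6
  exact h6

/-- Part B, right case: if all right arcs have positive measure, p is Auerbach -/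
lemma auerbach_right (s₀ : ℝ)
    (hright : ∀ ε : ℝ, 0 < ε → ε ≤ 1 → 0 < μ (arcK (K := K) s₀ (s₀ + ε))) :
    ∃ y ∈ frontier K, BOrth K (bphi (K := K) s₀) y ∧ BOrth K y (bphi (K := K) s₀) := by
  have hpi3 := Real.pi_gt_three
  set P := ENNReal.ofReal (π / 2) with hP
  have hPpos : 0 < P := by
    rw [hP]; exact ENNReal.ofReal_pos.2 (by linarith)
  have hPtop : P ≠ ⊤ := ENNReal.ofReal_ne_top
  have hPP : P + P = ENNReal.ofReal π := by
    rw [hP, ← ENNReal.ofReal_add (by linarith) (by linarith)]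
    norm_num
  -- the base shrinking sequence
  have hδ0pos : ∀ n : ℕ, 0 < (1:ℝ) / (n + 1) := by
    intro n; positivity
  have hδ0anti : Antitone (fun n : ℕ => (1:ℝ) / (n + 1)) := by
    intro n m hnm
    have h1 : (n:ℝ) + 1 ≤ (m:ℝ) + 1 := by
      have : (n:ℝ) ≤ (m:ℝ) := by exact_mod_cast hnm
      linarith
    exact one_div_le_one_div_of_le (by positivity) h1
  have hδ0to : Filter.Tendsto (fun n : ℕ => (1:ℝ) / (n + 1)) Filter.atTop (nhds 0) :=
    tendsto_one_div_add_atTop_nhds_zero_nat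
  have htend0 := tendsto_arc_right hK hμ s₀ hδ0pos (by norm_num) hδ0anti hδ0to
  have hev : ∀ᶠ n : ℕ in Filter.atTop,
      μ (arcK (K := K) s₀ (s₀ + 1 / ((n:ℝ) + 1))) < P := htend0.eventually_lt_const hPpos
  obtain ⟨N₀, hN₀⟩ := Filter.eventually_atTop.1 hev
  set δ : ℕ → ℝ := fun n => 1 / (((n + N₀ : ℕ) : ℝ) + 1) with hδ
  have hδeq : ∀ n : ℕ, δ n = 1 / ((n:ℝ) + (N₀:ℝ) + 1) := by
    intro n; rw [hδ]; push_cast; ring_nf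
  have hδpos : ∀ n, 0 < δ n := by
    intro n; rw [hδeq]; positivity
  have hδ1 : ∀ n, δ n ≤ 1 := by
    intro n
    rw [hδeq, div_le_one (by positivity)]
    have h1 : (0:ℝ) ≤ (n:ℝ) := Nat.cast_nonneg n
    have h2 : (0:ℝ) ≤ (N₀:ℝ) := Nat.cast_nonneg N₀
    linarith
  have hδanti : Antitone δ := fun n m hnm => hδ0anti (by omega : n + N₀ ≤ m + N₀)
  set lam : ℕ → ENNReal := fun n => μ (arcK (K := K) s₀ (s₀ + δ n)) with hlam
  have hlampos : ∀ n, 0 < lam n := fun n => hright (δ n) (hδpos n) (hδ1 n)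
  have hlamlt : ∀ n, lam n < P := fun n => hN₀ (n + N₀) (by omega)
  have hlamto : Filter.Tendsto lam Filter.atTop (nhds 0) :=
    tendsto_arc_right hK hμ s₀ hδpos (hδ1 0) hδanti
      ((hδ0to.comp (Filter.tendsto_add_atTop_nat N₀)))
  have hpi : (0:ℝ) < π := by linarith
  -- the backward family t n : orthogonal directions below s₀ + δ n
  have hchoice : ∀ n : ℕ, ∃ t ∈ Ioo (s₀ + δ n - π) (s₀ + δ n),
      BOrth K (bphi (K := K) (s₀ + δ n)) (bphi (K := K) t) := by
    intro n
    obtain ⟨t', ht', horth⟩ := exists_orth_fwd hK (s₀ + δ n)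
    refine ⟨t' - π, ⟨by linarith [ht'.1], by linarith [ht'.2]⟩, ?_⟩
    have hb : bphi (K := K) (t' - π) = - bphi (K := K) t' := by
      have h2 := bphi_add_pi hK (K := K) (t' - π)
      rw [sub_add_cancel] at h2
      rw [← neg_eq_iff_eq_neg] at h2
      rw [← h2]
    rw [hb]
    exact borth_neg_right horth
  choose t htmem htorth using hchoice
  have htP : ∀ n, μ (arcK (K := K) (t n) (s₀ + δ n)) = P := by
    intro n
    exact arc_orth_measure hK hμ (htmem n).2
      (by have := (htmem n).1; linarith) (Or.inr (htorth n))
  have hts : ∀ n, t n ≤ s₀ := by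
    intro n
    by_contra h
    push_neg at h
    have hsub : arcK (K := K) (t n) (s₀ + δ n) ⊆ arcK (K := K) s₀ (s₀ + δ n) :=
      arc_mono h.le le_rfl
    have h2 : P ≤ lam n := by
      rw [← htP n]
      exact measure_mono hsub
    exact absurd (lt_of_le_of_lt h2 (hlamlt n)) (lt_irrefl _)
  have hteq : ∀ n, P = lam n + μ (arcK (K := K) (t n) s₀) := by
    intro n
    have h2 : μ (arcK (K := K) (t n) (s₀ + δ n))
        = μ (arcK (K := K) (t n) s₀) + lam n := by
      exact arc_add hK hμ (hts n) (by linarith [hδpos n])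
        (by have := (htmem n).1; have := hδ1 n; linarith)
    rw [← htP n, h2, add_comm]
  have htIcc : ∀ n, t n ∈ Icc (s₀ - π) s₀ := by
    intro n
    exact ⟨by have := (htmem n).1; have := hδpos n; linarith, hts n⟩
  obtain ⟨τ1, hτ1mem, ψ1, hψ1mono, hψ1tend⟩ := isCompact_Icc.tendsto_subseq htIcc
  -- the forward family σ n (points orthogonal to bphi (s₀ - π + δ n))
  have hchoiceσ : ∀ n : ℕ, ∃ s ∈ Ioo (s₀ - π + δ n) (s₀ - π + δ n + π),
      BOrth K (bphi (K := K) s) (bphi (K := K) (s₀ - π + δ n)) := by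
    intro n
    obtain ⟨s', hs', horth⟩ := exists_orth_bwd hK (s₀ - π + δ n)
    refine ⟨s' + π, ⟨by linarith [hs'.1], by linarith [hs'.2]⟩, ?_⟩
    rw [bphi_add_pi hK]
    exact borth_neg_left hK horth
  choose σ hσmem hσorth using hchoiceσ
  have hσP : ∀ n, μ (arcK (K := K) (s₀ - π + δ n) (σ n)) = P := by
    intro n
    exact arc_orth_measure hK hμ (hσmem n).1
      (by have := (hσmem n).2; linarith) (Or.inr (hσorth n))
  have hlam' : ∀ n, μ (arcK (K := K) (s₀ - π) (s₀ - π + δ n)) = lam n := by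
    intro n
    have h2 := arc_neg_eq hK (K := K) (s₀ - π) (s₀ - π + δ n)
    rw [show s₀ - π + π = s₀ by ring, show s₀ - π + δ n + π = s₀ + δ n by ring] at h2
    rw [hlam]
    simp only []
    rw [h2, hμ.1.2.2.1]
  have hπsplit : ∀ n, ENNReal.ofReal π
      = lam n + μ (arcK (K := K) (s₀ - π + δ n) s₀) := by
    intro n
    have hhalf := arc_half hK hμ (s₀ - π)
    rw [show s₀ - π + π = s₀ by ring] at hhalf
    rw [← hhalf, ← hlam' n]
    exact arc_add hK hμ (by have := hδpos n; linarith)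
      (by have := hδ1 n; linarith) (by linarith)
  have hσs : ∀ n, σ n ≤ s₀ := by
    intro n
    by_contra h
    push_neg at h
    have hsub : arcK (K := K) (s₀ - π + δ n) s₀ ⊆ arcK (K := K) (s₀ - π + δ n) (σ n) :=
      arc_mono le_rfl h.le
    have h2 : μ (arcK (K := K) (s₀ - π + δ n) s₀) ≤ P := by
      rw [← hσP n]
      exact measure_mono hsub
    have h3 : ENNReal.ofReal π < P + P := by
      rw [hπsplit n, add_comm]
      exact ENNReal.add_lt_add_of_le_of_lt (ne_top_of_le_ne_top hPtop h2) h2 (hlamlt n)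
    rw [hPP] at h3
    exact lt_irrefl _ h3
  have hσeq : ∀ n, P = lam n + μ (arcK (K := K) (σ n) s₀) := by
    intro n
    have hsplit2 : μ (arcK (K := K) (s₀ - π + δ n) s₀)
        = P + μ (arcK (K := K) (σ n) s₀) := by
      rw [← hσP n]
      exact arc_add hK hμ (le_of_lt (hσmem n).1) (hσs n)
        (by have := hδpos n; linarith)
    have h4 : P + P = (lam n + μ (arcK (K := K) (σ n) s₀)) + P := by
      rw [← hPP] at hπsplit
      rw [hπsplit n, hsplit2]
      ring
    exact ((ENNReal.add_left_inj hPtop).1 h4.symm).symm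
  have hσIcc : ∀ n, σ n ∈ Icc (s₀ - π) s₀ := by
    intro n
    exact ⟨by have := (hσmem n).1; have := hδpos n; linarith, hσs n⟩
  obtain ⟨τ2, hτ2mem, ψ2, hψ2mono, hψ2tend⟩ := isCompact_Icc.tendsto_subseq hσIcc
  -- τ1 = τ2 via level_unique with negated variable
  set g : ℝ → ENNReal := fun w => μ (arcK (K := K) (min s₀ (-w)) s₀) with hg
  have hgmono : Monotone g := by
    intro w w' hww
    exact measure_mono (arc_mono (min_le_min le_rfl (by linarith)) le_rfl)
  have hgt : ∀ n, g (-(t n)) = μ (arcK (K := K) (t n) s₀) := by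
    intro n; rw [hg]; simp only [neg_neg]; rw [min_eq_right (hts n)]
  have hgσ : ∀ n, g (-(σ n)) = μ (arcK (K := K) (σ n) s₀) := by
    intro n; rw [hg]; simp only [neg_neg]; rw [min_eq_right (hσs n)]
  have hτeq : τ1 = τ2 := by
    have hneg : -τ1 = -τ2 := by
      refine level_unique hgmono hPtop (x1 := fun n => -(t (ψ1 n)))
        (x2 := fun n => -(σ (ψ2 n))) hψ1tend.neg hψ2tend.neg
        (hlamto.comp hψ1mono.tendsto_atTop) (hlamto.comp hψ2mono.tendsto_atTop)
        (fun n => hlampos (ψ1 n)) (fun n => hlampos (ψ2 n)) (fun n => ?_) (fun n => ?_)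
      · show P = lam (ψ1 n) + g (-(t (ψ1 n)))
        rw [hgt (ψ1 n)]
        exact hteq (ψ1 n)
      · show P = lam (ψ2 n) + g (-(σ (ψ2 n)))
        rw [hgσ (ψ2 n)]
        exact hσeq (ψ2 n)
    linarith [neg_injective hneg]
  -- limits of orthogonality
  have hδψ1 : Filter.Tendsto (fun n => s₀ + δ (ψ1 n)) Filter.atTop (nhds (s₀ + 0)) :=
    Filter.Tendsto.const_add s₀
      ((hδ0to.comp (Filter.tendsto_add_atTop_nat N₀)).comp hψ1mono.tendsto_atTop)
  rw [add_zero] at hδψ1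
  have horth1 : BOrth K (bphi (K := K) s₀) (bphi (K := K) τ1) := by
    apply borth_limit hK (xn := fun n => bphi (K := K) (s₀ + δ (ψ1 n)))
      (yn := fun n => bphi (K := K) (t (ψ1 n)))
    · exact ((bphi_continuous hK).tendsto _).comp hδψ1
    · exact ((bphi_continuous hK).tendsto _).comp hψ1tend
    · intro n; exact htorth (ψ1 n)
  have hδψ2 : Filter.Tendsto (fun n => s₀ - π + δ (ψ2 n)) Filter.atTop (nhds (s₀ - π + 0)) :=
    Filter.Tendsto.const_add (s₀ - π)
      ((hδ0to.comp (Filter.tendsto_add_atTop_nat N₀)).comp hψ2mono.tendsto_atTop)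
  rw [add_zero] at hδψ2
  have horth2 : BOrth K (bphi (K := K) τ2) (bphi (K := K) (s₀ - π)) := by
    apply borth_limit hK (xn := fun n => bphi (K := K) (σ (ψ2 n)))
      (yn := fun n => bphi (K := K) (s₀ - π + δ (ψ2 n)))
    · exact ((bphi_continuous hK).tendsto _).comp hψ2tend
    · exact ((bphi_continuous hK).tendsto _).comp hδψ2
    · intro n; exact hσorth (ψ2 n)
  -- conclude
  refine ⟨bphi (K := K) τ1, bphi_mem_frontier hK τ1, horth1, ?_⟩
  rw [hτeq]
  have hbsp : bphi (K := K) (s₀ - π) = - bphi (K := K) s₀ := by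
    have h2 := bphi_add_pi hK (K := K) (s₀ - π)
    rw [sub_add_cancel] at h2
    rw [← neg_eq_iff_eq_neg] at h2
    rw [← h2]
  rw [hbsp] at horth2
  have h6 : BOrth K (bphi (K := K) τ2) (-(- bphi (K := K) s₀)) :=
    borth_neg_right horth2
  rw [neg_neg] at h6
  exact h6

end Meas

end Body

end BMAux

/-- The support of a B-measure is contained in `A(K) \ E(K)`. -/
theorem stmt_3 (K : Set Plane) (hK : IsSymmConvexBody K)
    (μ : Measure Plane) (hμ : IsBMeasure K μ) :
    msupp μ ⊆ Auerbach K \ SegUnion K := by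
  intro p hp
  have hp' : ∀ U : Set Plane, IsOpen U → p ∈ U → 0 < μ U := hp
  have hpi3 := Real.pi_gt_three
  have hpi : (0:ℝ) < Real.pi := by linarith
  -- p is on the frontier
  have hpfr : p ∈ frontier K := by
    by_contra h
    have h2 := hp' (frontier K)ᶜ (isClosed_frontier).isOpen_compl h
    rw [hμ.1.2.1] at h2
    exact lt_irrefl _ h2
  refine ⟨?_, BMAux.not_segunion hK hμ hp'⟩
  -- Auerbach membership
  obtain ⟨s₀, hs₀mem, hbp⟩ := BMAux.bphi_surj hK hpfr 0
  by_cases hL : ∀ ε : ℝ, 0 < ε → ε ≤ 1 → 0 < μ (BMAux.arcK (K := K) (s₀ - ε) s₀)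
  · obtain ⟨y, hyfr, h1, h2⟩ := BMAux.auerbach_left hK hμ s₀ hL
    rw [hbp] at h1 h2
    exact ⟨hpfr, y, hyfr, h1, h2⟩
  · push_neg at hL
    obtain ⟨ε₁, hε₁pos, hε₁le, hε₁z⟩ := hL
    rw [le_zero_iff] at hε₁z
    have hR : ∀ ε : ℝ, 0 < ε → ε ≤ 1 → 0 < μ (BMAux.arcK (K := K) s₀ (s₀ + ε)) := by
      intro ε hεpos hεle
      by_contra h
      push_neg at h
      rw [le_zero_iff] at h
      set ε₃ := min ε₁ ε with hε₃
      have hε₃pos : 0 < ε₃ := lt_min hε₁pos hεpos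
      have hε₃le : ε₃ ≤ 1 := le_trans (min_le_left _ _) hε₁le
      have hzl : μ (BMAux.arcK (K := K) (s₀ - ε₃) s₀) = 0 := by
        apply le_antisymm _ zero_le
        rw [← hε₁z]
        exact measure_mono (BMAux.arc_mono (by
          have := min_le_left ε₁ ε; linarith) le_rfl)
      have hzr : μ (BMAux.arcK (K := K) s₀ (s₀ + ε₃)) = 0 := by
        apply le_antisymm _ zero_le
        rw [← h]
        exact measure_mono (BMAux.arc_mono le_rfl (by
          have := min_le_right ε₁ ε; linarith))
      have hzz : μ (BMAux.arcK (K := K) (s₀ - ε₃) (s₀ + ε₃)) = 0 := by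
        rw [BMAux.arc_union (K := K) (by linarith : s₀ - ε₃ ≤ s₀) (by linarith : s₀ ≤ s₀ + ε₃)]
        apply le_antisymm _ zero_le
        calc μ (BMAux.arcK (K := K) (s₀ - ε₃) s₀ ∪ BMAux.arcK (K := K) s₀ (s₀ + ε₃))
            ≤ μ (BMAux.arcK (K := K) (s₀ - ε₃) s₀) + μ (BMAux.arcK (K := K) s₀ (s₀ + ε₃)) :=
              measure_union_le _ _
          _ = 0 := by rw [hzl, hzr, add_zero]
      have hsin : 0 < Real.sin ε₃ := Real.sin_pos_of_pos_of_lt_pi hε₃pos (by linarith)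
      have hpos := BMAux.supp_cone_pos hK hμ
        (show s₀ - ε₃ < s₀ + ε₃ by linarith)
        (show s₀ + ε₃ - (s₀ - ε₃) < Real.pi by
          have : s₀ + ε₃ - (s₀ - ε₃) = 2 * ε₃ := by ring
          rw [this]; linarith) hp'
        (by
          rw [← hbp, BMAux.crossP_bphi]
          rw [show s₀ - (s₀ - ε₃) = ε₃ by ring]
          have h1 := BMAux.gauge_unitv_pos hK (s₀ - ε₃)
          have h2 := BMAux.gauge_unitv_pos hK s₀
          positivity)
        (by
          rw [← hbp, BMAux.crossP_bphi]
          rw [show s₀ + ε₃ - s₀ = ε₃ by ring]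
          have h1 := BMAux.gauge_unitv_pos hK (s₀ + ε₃)
          have h2 := BMAux.gauge_unitv_pos hK s₀
          positivity)
      rw [hzz] at hpos
      exact lt_irrefl _ hpos
    obtain ⟨y, hyfr, h1, h2⟩ := BMAux.auerbach_right hK hμ s₀ hR
    rw [hbp] at h1 h2
    exact ⟨hpfr, y, hyfr, h1, h2⟩
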